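/- For every integer q ≥ 1, the series ∑_{n≥0} a_{q,n}·(n+q)·2^{−(n+q)} converges and equals 2(2^q − 1). (This is the value F_s(1,0) of the derivative in s of F(s,0) = ∑_{w∈χ(0^q)} (s/2)^{ℓ(w)+q} at s = 1.) -/

import Mathlib

/-- A binary word (`false` = 0, `true` = 1) lies in `χ(0^q)` iff it contains no block of `q`
consecutive 0s and its rightmost digit is 1 (the empty word is allowed). -/
def goodWord (q : ℕ) (w : List Bool) : Prop :=
  ¬ (List.replicate q false <:+: w) ∧ ∀ h : w ≠ [], w.getLast h = true

open List in
lemma not_rep_prefix_block {q k : ℕ} (hk : k < q) (t : List Bool) :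
    ¬ (replicate q false <+: replicate k false ++ true :: t) := by
  intro h
  have hlen : k < (replicate q false).length := by simpa using hk
  have h2 := h.getElem hlen
  rw [List.getElem_append_right (by simp)] at h2
  simp at h2

open List in
lemma rep_infix_block {q : ℕ} {k : ℕ} (hk : k < q) (t : List Bool) :
    (replicate q false <:+: replicate k false ++ true :: t) ↔ replicate q false <:+: t := by
  induction k with
  | zero =>
    simp only [replicate_zero, nil_append]
    rw [infix_cons_iff]
    constructor
    · rintro (h | h)
      · exact absurd h (by simpa using not_rep_prefix_block hk t)
      · exact h
    · exact Or.inr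
  | succ k ih =>
    rw [replicate_succ, cons_append, infix_cons_iff]
    constructor
    · rintro (h | h)
      · exact absurd h (by simpa [replicate_succ, cons_append] using not_rep_prefix_block hk t)
      · exact (ih (by omega)).mp h
    · intro h
      exact Or.inr ((ih (by omega)).mpr h)

open List in
lemma goodWord_block {q k : ℕ} (hk : k < q) (t : List Bool) :
    goodWord q (List.replicate k false ++ true :: t) ↔ goodWord q t := by
  unfold goodWord
  rw [rep_infix_block hk]
  refine and_congr_right fun _ => ?_
  have hne : (true :: t) ≠ [] := by simp
  have hlast : ∀ h, (List.replicate k false ++ true :: t).getLast h = (true :: t).getLast hne := by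
    intro h
    exact List.getLast_append_right hne
  constructor
  · intro H h
    have := H (by simp)
    rw [hlast, List.getLast_cons h] at this
    exact this
  · intro H h
    rw [hlast]
    rcases eq_or_ne t [] with rfl | hne'
    · simp
    · rw [List.getLast_cons hne']
      exact H hne'

open List in
lemma exists_block {q : ℕ} :
    ∀ l : List Bool, goodWord q l → l ≠ [] → ∃ k t, l = List.replicate k false ++ true :: t := by
  intro l
  induction l with
  | nil => tauto
  | cons b rest ih =>
    intro hg _
    cases b with
    | true => exact ⟨0, rest, rfl⟩
    | false =>
      have hrest_ne : rest ≠ [] := by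
        rintro rfl
        have := hg.2 (by simp)
        simp at this
      have hgr : goodWord q rest := by
        constructor
        · intro h
          exact hg.1 (infix_cons_iff.mpr (Or.inr h))
        · intro h
          have := hg.2 (by simp)
          rwa [List.getLast_cons hrest_ne] at this
      obtain ⟨k, t, rfl⟩ := ih hgr hrest_ne
      exact ⟨k + 1, t, rfl⟩

open List in
lemma block_lt {q k : ℕ} (hq : 1 ≤ q) {t : List Bool}
    (hg : goodWord q (List.replicate k false ++ true :: t)) : k < q := by
  by_contra hkq
  push_neg at hkq
  apply hg.1
  have h1 : replicate q false <+: replicate k false :=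
    ⟨replicate (k - q) false, by rw [← replicate_add]; congr 1; omega⟩
  exact (h1.trans (prefix_append _ _)).isInfix

open List in
lemma block_inj : ∀ (k k' : ℕ) (t t' : List Bool),
    List.replicate k false ++ true :: t = List.replicate k' false ++ true :: t' →
    k = k' ∧ t = t' := by
  intro k
  induction k with
  | zero =>
    intro k' t t' h
    cases k' with
    | zero => simpa using h
    | succ k' => simp [replicate_succ] at h
  | succ k ih =>
    intro k' t t' h
    cases k' with
    | zero => simp [replicate_succ] at h
    | succ k' =>
      simp only [replicate_succ, cons_append, cons.injEq, true_and] at h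
      obtain ⟨h1, h2⟩ := ih k' t t' h
      exact ⟨by omega, h2⟩

/-- `a q n` is the number of words of length `n` in `χ(0^q)`. -/
noncomputable def wordCount (q n : ℕ) : ℕ :=
  Nat.card {w : Fin n → Bool // goodWord q (List.ofFn w)}

def finListEquiv (q n : ℕ) :
    {w : Fin n → Bool // goodWord q (List.ofFn w)} ≃
      {l : List Bool // l.length = n ∧ goodWord q l} where
  toFun w := ⟨List.ofFn w.1, by simp, w.2⟩
  invFun l := ⟨fun i => l.1[i.1]'(by rw [l.2.1]; exact i.2), by
    have h : List.ofFn (fun i : Fin n => l.1[i.1]'(by rw [l.2.1]; exact i.2)) = l.1 := by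
      apply List.ext_getElem (by simp [l.2.1])
      intro i h1 h2
      simp
    rw [h]
    exact l.2.2⟩
  left_inv w := by
    ext i
    simp
  right_inv l := by
    ext1
    apply List.ext_getElem (by simp [l.2.1])
    intro i h1 h2
    simp

instance goodListFinite (q n : ℕ) : Finite {l : List Bool // l.length = n ∧ goodWord q l} :=
  Finite.of_equiv _ (finListEquiv q n)

lemma wordCount_eq (q n : ℕ) :
    wordCount q n = Nat.card {l : List Bool // l.length = n ∧ goodWord q l} :=
  Nat.card_congr (finListEquiv q n)

lemma wordCount_zero {q : ℕ} (hq : 1 ≤ q) : wordCount q 0 = 1 := by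
  rw [wordCount_eq]
  have : Unique {l : List Bool // l.length = 0 ∧ goodWord q l} := by
    refine ⟨⟨⟨[], rfl, ?_, fun h => absurd rfl h⟩⟩, ?_⟩
    · intro h
      rw [List.infix_nil] at h
      rw [List.replicate_eq_nil_iff] at h
      omega
    · rintro ⟨l, hl, _⟩
      ext1
      simpa using hl
  exact Nat.card_unique

def blockMap (q n : ℕ) :
    (Σ k : Fin (min q (n + 1)), {l : List Bool // l.length = n - k.1 ∧ goodWord q l}) →
      {l : List Bool // l.length = n + 1 ∧ goodWord q l} :=
  fun p => ⟨List.replicate p.1.1 false ++ true :: p.2.1, by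
    have hk := p.1.2
    have hkq : p.1.1 < q := lt_of_lt_of_le hk (min_le_left _ _)
    constructor
    · have hkn : p.1.1 < n + 1 := lt_of_lt_of_le p.1.2 (min_le_right _ _)
      have := p.2.2.1
      simp [this]
      omega
    · exact (goodWord_block (lt_of_lt_of_le p.1.2 (min_le_left _ _)) _).mpr p.2.2.2⟩

lemma blockMap_bijective (q n : ℕ) (hq : 1 ≤ q) : Function.Bijective (blockMap q n) := by
  constructor
  · rintro ⟨k, t⟩ ⟨k', t'⟩ h
    have h' : List.replicate k.1 false ++ true :: t.1
        = List.replicate k'.1 false ++ true :: t'.1 := congrArg Subtype.val h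
    obtain ⟨h1, h2⟩ := block_inj _ _ _ _ h'
    have : k = k' := Fin.ext h1
    subst this
    simp only [Sigma.mk.inj_iff, heq_eq_eq, true_and]
    exact Subtype.ext h2
  · rintro ⟨l, hlen, hg⟩
    have hne : l ≠ [] := by
      intro h; rw [h] at hlen; simp at hlen
    obtain ⟨k, t, rfl⟩ := exists_block l hg hne
    have hkq : k < q := block_lt hq hg
    have hlen' : k + (t.length + 1) = n + 1 := by
      simpa using hlen
    refine ⟨⟨⟨k, by simp; omega⟩, ⟨t, show t.length = n - k by omega, (goodWord_block hkq t).mp hg⟩⟩, rfl⟩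

lemma wordCount_succ {q : ℕ} (hq : 1 ≤ q) (n : ℕ) :
    wordCount q (n + 1) = ∑ k ∈ Finset.range (min q (n + 1)), wordCount q (n - k) := by
  classical
  rw [wordCount_eq]
  rw [← Nat.card_congr (Equiv.ofBijective _ (blockMap_bijective q n hq))]
  letI : ∀ k : Fin (min q (n+1)), Fintype {l : List Bool // l.length = n - k.1 ∧ goodWord q l} :=
    fun k => Fintype.ofFinite _
  rw [Nat.card_eq_fintype_card, Fintype.card_sigma]
  rw [Finset.sum_range fun k => wordCount q (n - k)]
  apply Finset.sum_congr rfl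
  intro k _
  rw [wordCount_eq, Nat.card_eq_fintype_card]

noncomputable def bb (q n : ℕ) : ℝ := (wordCount q n : ℝ) * (2⁻¹ : ℝ) ^ n

lemma bb_nonneg (q n : ℕ) : 0 ≤ bb q n := by
  unfold bb; positivity

lemma bb_zero {q : ℕ} (hq : 1 ≤ q) : bb q 0 = 1 := by
  simp [bb, wordCount_zero hq]

lemma bb_rec {q : ℕ} (hq : 1 ≤ q) (n : ℕ) :
    bb q (n + 1) = ∑ k ∈ Finset.range q,
      (if k ≤ n then (2⁻¹ : ℝ) ^ (k + 1) * bb q (n - k) else 0) := by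
  rw [← Finset.sum_filter]
  have hfil : (Finset.range q).filter (fun k => k ≤ n) = Finset.range (min q (n + 1)) := by
    ext k
    simp [Finset.mem_filter, Finset.mem_range]
  rw [hfil]
  unfold bb
  rw [wordCount_succ hq n, Nat.cast_sum, Finset.sum_mul]
  apply Finset.sum_congr rfl
  intro k hk
  have hkn : k ≤ n := by
    simp [Finset.mem_range] at hk
    omega
  have hpow : (2⁻¹ : ℝ) ^ (n + 1) = (2⁻¹ : ℝ) ^ (k + 1) * (2⁻¹ : ℝ) ^ (n - k) := by
    rw [← pow_add]
    congr 1
    omega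
  rw [hpow]
  ring

lemma sum_shift (f : ℕ → ℝ) (k M : ℕ) :
    ∑ n ∈ Finset.range (M + k), (if k ≤ n then f (n - k) else 0)
      = ∑ m ∈ Finset.range M, f m := by
  induction M with
  | zero =>
    simp only [Nat.zero_add, Finset.range_zero, Finset.sum_empty]
    apply Finset.sum_eq_zero
    intro n hn
    simp only [Finset.mem_range] at hn
    rw [if_neg (by omega)]
  | succ M ih =>
    rw [show M + 1 + k = (M + k) + 1 by omega, Finset.sum_range_succ, ih,
      Finset.sum_range_succ, if_pos (by omega)]
    congr 2
    omega

lemma hasSum_shift {f : ℕ → ℝ} {a : ℝ} (hf : HasSum f a) (k : ℕ) :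
    HasSum (fun n => if k ≤ n then f (n - k) else 0) a := by
  have h0 : ∑ i ∈ Finset.range k, (if k ≤ i then f (i - k) else 0) = 0 := by
    apply Finset.sum_eq_zero
    intro n hn
    simp only [Finset.mem_range] at hn
    rw [if_neg (by omega)]
  have h2 : (fun n => if k ≤ n + k then f (n + k - k) else 0) = f := by
    funext n
    simp
  have := (hasSum_nat_add_iff' (f := fun n => if k ≤ n then f (n - k) else 0) k (g := a + 0))
  rw [h0] at this
  simp only [add_zero, add_sub_cancel_right, sub_zero] at this
  rw [← this, h2]
  exact hf

lemma geo1 (q : ℕ) : ∑ k ∈ Finset.range q, (2⁻¹ : ℝ) ^ (k + 1) = 1 - (2⁻¹ : ℝ) ^ q := by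
  induction q with
  | zero => simp
  | succ q ih => rw [Finset.sum_range_succ, ih]; ring

lemma geo2 (q : ℕ) : ∑ k ∈ Finset.range q, ((k : ℝ) + 1) * (2⁻¹ : ℝ) ^ (k + 1)
    = 2 - ((q : ℝ) + 2) * (2⁻¹ : ℝ) ^ q := by
  induction q with
  | zero => simp
  | succ q ih => rw [Finset.sum_range_succ, ih]; push_cast; ring

lemma sum_ite_le {q : ℕ} (k M : ℕ) (f : ℕ → ℝ) (hf : ∀ m, 0 ≤ f m) :
    ∑ n ∈ Finset.range M, (if k ≤ n then f (n - k) else 0) ≤ ∑ m ∈ Finset.range M, f m := by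
  calc ∑ n ∈ Finset.range M, (if k ≤ n then f (n - k) else 0)
      ≤ ∑ n ∈ Finset.range (M + k), (if k ≤ n then f (n - k) else 0) := by
        apply Finset.sum_le_sum_of_subset_of_nonneg
        · exact Finset.range_subset_range.mpr (by omega)
        · intro n _ _
          split
          exacts [hf _, le_rfl]
    _ = ∑ m ∈ Finset.range M, f m := sum_shift f k M

lemma S_le {q : ℕ} (hq : 1 ≤ q) (N : ℕ) : ∑ n ∈ Finset.range N, bb q n ≤ 2 ^ q := by
  have hx : (0 : ℝ) < (2⁻¹ : ℝ) ^ q := by positivity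
  have hx2 : ((2⁻¹ : ℝ) ^ q) * 2 ^ q = 1 := by
    rw [← mul_pow]; norm_num
  cases N with
  | zero =>
    simp only [Finset.range_zero, Finset.sum_empty]
    positivity
  | succ M =>
    set S := ∑ n ∈ Finset.range (M + 1), bb q n with hS
    have hSnn : ∀ M', ∑ n ∈ Finset.range M', bb q n ≤ S ∨ True := fun _ => Or.inr trivial
    have hmono : ∑ m ∈ Finset.range M, bb q m ≤ S := by
      apply Finset.sum_le_sum_of_subset_of_nonneg
      · exact Finset.range_subset_range.mpr (by omega)
      · exact fun n _ _ => bb_nonneg q n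
    have h1 : S = ∑ n ∈ Finset.range M, bb q (n + 1) + 1 := by
      rw [hS, Finset.sum_range_succ' (fun n => bb q n) M, bb_zero hq]
    have h2 : ∑ n ∈ Finset.range M, bb q (n + 1) ≤ (1 - (2⁻¹ : ℝ) ^ q) * S := by
      calc ∑ n ∈ Finset.range M, bb q (n + 1)
          = ∑ n ∈ Finset.range M, ∑ k ∈ Finset.range q,
              (if k ≤ n then (2⁻¹ : ℝ) ^ (k + 1) * bb q (n - k) else 0) :=
            Finset.sum_congr rfl fun n _ => bb_rec hq n
        _ = ∑ k ∈ Finset.range q, ∑ n ∈ Finset.range M,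
              (if k ≤ n then (2⁻¹ : ℝ) ^ (k + 1) * bb q (n - k) else 0) := Finset.sum_comm
        _ ≤ ∑ k ∈ Finset.range q, (2⁻¹ : ℝ) ^ (k + 1) * S := by
            apply Finset.sum_le_sum
            intro k _
            calc ∑ n ∈ Finset.range M, (if k ≤ n then (2⁻¹ : ℝ) ^ (k + 1) * bb q (n - k) else 0)
                ≤ ∑ m ∈ Finset.range M, (2⁻¹ : ℝ) ^ (k + 1) * bb q m :=
                  sum_ite_le (q := q) k M (fun m => (2⁻¹ : ℝ) ^ (k + 1) * bb q m)
                    (fun m => mul_nonneg (by positivity) (bb_nonneg q m))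
              _ = (2⁻¹ : ℝ) ^ (k + 1) * ∑ m ∈ Finset.range M, bb q m := by
                  rw [Finset.mul_sum]
              _ ≤ (2⁻¹ : ℝ) ^ (k + 1) * S := by
                  apply mul_le_mul_of_nonneg_left hmono (by positivity)
        _ = (1 - (2⁻¹ : ℝ) ^ q) * S := by rw [← Finset.sum_mul, geo1]
    have key : (2⁻¹ : ℝ) ^ q * S ≤ 1 := by nlinarith
    nlinarith [mul_le_mul_of_nonneg_left key (by positivity : (0:ℝ) ≤ (2:ℝ) ^ q)]

lemma bb_rec' {q : ℕ} (hq : 1 ≤ q) (n : ℕ) :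
    ((n : ℝ) + 1) * bb q (n + 1) = ∑ k ∈ Finset.range q,
      (if k ≤ n then (2⁻¹ : ℝ) ^ (k + 1) * (((n - k : ℕ) : ℝ) + (k + 1)) * bb q (n - k) else 0) := by
  rw [bb_rec hq n, Finset.mul_sum]
  apply Finset.sum_congr rfl
  intro k _
  split
  · rename_i hkn
    rw [Nat.cast_sub hkn]
    ring
  · rw [mul_zero]

lemma T_le {q : ℕ} (hq : 1 ≤ q) (N : ℕ) :
    ∑ n ∈ Finset.range N, (n : ℝ) * bb q n ≤ 2 * 2 ^ q * 2 ^ q := by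
  have hx : (0 : ℝ) < (2⁻¹ : ℝ) ^ q := by positivity
  have hx2 : ((2⁻¹ : ℝ) ^ q) * 2 ^ q = 1 := by rw [← mul_pow]; norm_num
  have h2q : (0 : ℝ) < 2 ^ q := by positivity
  cases N with
  | zero =>
    simp only [Finset.range_zero, Finset.sum_empty]
    positivity
  | succ M =>
    set T := ∑ n ∈ Finset.range (M + 1), (n : ℝ) * bb q n with hT
    have hTmono : ∑ m ∈ Finset.range M, (m : ℝ) * bb q m ≤ T := by
      apply Finset.sum_le_sum_of_subset_of_nonneg
      · exact Finset.range_subset_range.mpr (by omega)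
      · exact fun n _ _ => mul_nonneg (Nat.cast_nonneg n) (bb_nonneg q n)
    have h1 : T = ∑ n ∈ Finset.range M, ((n : ℝ) + 1) * bb q (n + 1) := by
      rw [hT, Finset.sum_range_succ' (fun n => (n : ℝ) * bb q n) M]
      push_cast
      simp
    have h2 : T ≤ (1 - (2⁻¹ : ℝ) ^ q) * T + 2 * 2 ^ q := by
      have step : T ≤ ∑ k ∈ Finset.range q,
          (2⁻¹ : ℝ) ^ (k + 1) * (T + ((k : ℝ) + 1) * 2 ^ q) := by
        calc T
            = ∑ n ∈ Finset.range M, ((n : ℝ) + 1) * bb q (n + 1) := h1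
          _ = ∑ n ∈ Finset.range M, ∑ k ∈ Finset.range q,
                (if k ≤ n then
                  (2⁻¹ : ℝ) ^ (k + 1) * (((n - k : ℕ) : ℝ) + (k + 1)) * bb q (n - k) else 0) :=
              Finset.sum_congr rfl fun n _ => bb_rec' hq n
          _ = ∑ k ∈ Finset.range q, ∑ n ∈ Finset.range M,
                (if k ≤ n then
                  (2⁻¹ : ℝ) ^ (k + 1) * (((n - k : ℕ) : ℝ) + (k + 1)) * bb q (n - k) else 0) :=
              Finset.sum_comm
          _ ≤ ∑ k ∈ Finset.range q, (2⁻¹ : ℝ) ^ (k + 1) * (T + ((k : ℝ) + 1) * 2 ^ q) := by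
              apply Finset.sum_le_sum
              intro k _
              calc ∑ n ∈ Finset.range M,
                    (if k ≤ n then
                      (2⁻¹ : ℝ) ^ (k + 1) * (((n - k : ℕ) : ℝ) + (k + 1)) * bb q (n - k) else 0)
                  ≤ ∑ m ∈ Finset.range M,
                      (2⁻¹ : ℝ) ^ (k + 1) * (((m : ℕ) : ℝ) + (k + 1)) * bb q m :=
                    sum_ite_le (q := q) k M
                      (fun m => (2⁻¹ : ℝ) ^ (k + 1) * (((m : ℕ) : ℝ) + (k + 1)) * bb q m)
                      (fun m => mul_nonneg (mul_nonneg (by positivity) (by positivity))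
                        (bb_nonneg q m))
                _ = (2⁻¹ : ℝ) ^ (k + 1) * (∑ m ∈ Finset.range M, (m : ℝ) * bb q m
                      + ((k : ℝ) + 1) * ∑ m ∈ Finset.range M, bb q m) := by
                    simp only [Finset.mul_sum, ← Finset.sum_add_distrib]
                    apply Finset.sum_congr rfl
                    intro m _
                    ring
                _ ≤ (2⁻¹ : ℝ) ^ (k + 1) * (T + ((k : ℝ) + 1) * 2 ^ q) := by
                    apply mul_le_mul_of_nonneg_left _ (by positivity)
                    have hS := S_le hq M
                    have hk1 : (0 : ℝ) ≤ (k : ℝ) + 1 := by positivity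
                    nlinarith [mul_le_mul_of_nonneg_left hS hk1]
      have expand : ∑ k ∈ Finset.range q,
          (2⁻¹ : ℝ) ^ (k + 1) * (T + ((k : ℝ) + 1) * 2 ^ q)
          = (1 - (2⁻¹ : ℝ) ^ q) * T + (2 - ((q : ℝ) + 2) * (2⁻¹ : ℝ) ^ q) * 2 ^ q := by
        have : ∀ k : ℕ, (2⁻¹ : ℝ) ^ (k + 1) * (T + ((k : ℝ) + 1) * 2 ^ q)
            = (2⁻¹ : ℝ) ^ (k + 1) * T + (((k : ℝ) + 1) * (2⁻¹ : ℝ) ^ (k + 1)) * 2 ^ q := by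
          intro k; ring
        rw [Finset.sum_congr rfl fun k _ => this k, Finset.sum_add_distrib,
          ← Finset.sum_mul, ← Finset.sum_mul, geo1, geo2]
      rw [expand] at step
      have hq2 : (0 : ℝ) ≤ ((q : ℝ) + 2) * (2⁻¹ : ℝ) ^ q := by positivity
      nlinarith
    have key : (2⁻¹ : ℝ) ^ q * T ≤ 2 * 2 ^ q := by nlinarith
    nlinarith [mul_le_mul_of_nonneg_left key (le_of_lt h2q)]

lemma summable_bb {q : ℕ} (hq : 1 ≤ q) : Summable (bb q) :=
  summable_of_sum_range_le (fun n => bb_nonneg q n) (S_le hq)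

lemma summable_nbb {q : ℕ} (hq : 1 ≤ q) : Summable (fun n : ℕ => (n : ℝ) * bb q n) :=
  summable_of_sum_range_le (fun n => mul_nonneg (Nat.cast_nonneg n) (bb_nonneg q n)) (T_le hq)

lemma hxA {q : ℕ} (hq : 1 ≤ q) : (2⁻¹ : ℝ) ^ q * (∑' n, bb q n) = 1 := by
  set A := ∑' n, bb q n with hA
  have hb : HasSum (bb q) A := (summable_bb hq).hasSum
  have h1 : HasSum (fun n => bb q (n + 1)) (A - 1) := by
    have := (hasSum_nat_add_iff' (f := bb q) 1).mpr hb
    simpa [bb_zero hq] using this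
  have h2 : HasSum (fun n => bb q (n + 1)) ((1 - (2⁻¹ : ℝ) ^ q) * A) := by
    have hk : ∀ k ∈ Finset.range q, HasSum
        (fun n => if k ≤ n then (2⁻¹ : ℝ) ^ (k + 1) * bb q (n - k) else 0)
        ((2⁻¹ : ℝ) ^ (k + 1) * A) :=
      fun k _ => hasSum_shift (hb.mul_left _) k
    have h3 := hasSum_sum hk
    rw [← Finset.sum_mul, geo1] at h3
    have hfun : (fun n => ∑ k ∈ Finset.range q,
        (if k ≤ n then (2⁻¹ : ℝ) ^ (k + 1) * bb q (n - k) else 0))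
        = fun n => bb q (n + 1) := funext fun n => (bb_rec hq n).symm
    rwa [hfun] at h3
  have heq := h1.unique h2
  linear_combination heq

lemma hxB {q : ℕ} (hq : 1 ≤ q) :
    (2⁻¹ : ℝ) ^ q * (∑' n : ℕ, (n : ℝ) * bb q n)
      = (2 - ((q : ℝ) + 2) * (2⁻¹ : ℝ) ^ q) * (∑' n, bb q n) := by
  set A := ∑' n, bb q n with hA
  set B := ∑' n : ℕ, (n : ℝ) * bb q n with hB
  have hb : HasSum (bb q) A := (summable_bb hq).hasSum
  have hnb : HasSum (fun n : ℕ => (n : ℝ) * bb q n) B := (summable_nbb hq).hasSum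
  have h1 : HasSum (fun n : ℕ => ((n : ℝ) + 1) * bb q (n + 1)) B := by
    have := (hasSum_nat_add_iff' (f := fun n : ℕ => (n : ℝ) * bb q n) 1).mpr hnb
    simp only [Finset.range_one, Finset.sum_singleton, Nat.cast_zero, zero_mul, sub_zero] at this
    have hfy : (fun n : ℕ => ((n + 1 : ℕ) : ℝ) * bb q (n + 1))
        = fun n : ℕ => ((n : ℝ) + 1) * bb q (n + 1) := by
      funext n; push_cast; ring
    rwa [hfy] at this
  have h2 : HasSum (fun n : ℕ => ((n : ℝ) + 1) * bb q (n + 1))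
      ((1 - (2⁻¹ : ℝ) ^ q) * B + (2 - ((q : ℝ) + 2) * (2⁻¹ : ℝ) ^ q) * A) := by
    have hk : ∀ k ∈ Finset.range q, HasSum
        (fun n : ℕ => if k ≤ n then
          (2⁻¹ : ℝ) ^ (k + 1) * (((n - k : ℕ) : ℝ) + (k + 1)) * bb q (n - k) else 0)
        ((2⁻¹ : ℝ) ^ (k + 1) * B + (((k : ℝ) + 1) * (2⁻¹ : ℝ) ^ (k + 1)) * A) := by
      intro k _
      have base := (hnb.mul_left ((2⁻¹ : ℝ) ^ (k + 1))).add
        (hb.mul_left ((2⁻¹ : ℝ) ^ (k + 1) * ((k : ℝ) + 1)))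
      have hfy : (fun m : ℕ => (2⁻¹ : ℝ) ^ (k + 1) * ((m : ℝ) * bb q m)
            + (2⁻¹ : ℝ) ^ (k + 1) * ((k : ℝ) + 1) * bb q m)
          = fun m : ℕ => (2⁻¹ : ℝ) ^ (k + 1) * ((m : ℝ) + (k + 1)) * bb q m := by
        funext m; ring
      rw [hfy] at base
      have base' : HasSum (fun m : ℕ => (2⁻¹ : ℝ) ^ (k + 1) * ((m : ℝ) + (k + 1)) * bb q m)
          ((2⁻¹ : ℝ) ^ (k + 1) * B + (((k : ℝ) + 1) * (2⁻¹ : ℝ) ^ (k + 1)) * A) := by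
        rw [show ((k : ℝ) + 1) * (2⁻¹ : ℝ) ^ (k + 1) = (2⁻¹ : ℝ) ^ (k + 1) * ((k : ℝ) + 1) by ring]
        exact base
      exact hasSum_shift base' k
    have h3 := hasSum_sum hk
    have hfun : (fun n : ℕ => ∑ k ∈ Finset.range q,
        (if k ≤ n then
          (2⁻¹ : ℝ) ^ (k + 1) * (((n - k : ℕ) : ℝ) + (k + 1)) * bb q (n - k) else 0))
        = fun n : ℕ => ((n : ℝ) + 1) * bb q (n + 1) := funext fun n => (bb_rec' hq n).symm
    rw [hfun] at h3
    convert h3 using 1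
    rw [Finset.sum_add_distrib, ← Finset.sum_mul, ← Finset.sum_mul, geo1, geo2]
  have heq := h1.unique h2
  linear_combination heq

/-- For `q ≥ 1`, the series `∑_{n≥0} a_{q,n}·(n+q)·2^{−(n+q)}` converges and equals
`2(2^q − 1)`; this is `F_s(1,0)` for `F(s,0) = ∑_{w ∈ χ(0^q)} (s/2)^{ℓ(w)+q}`. -/
theorem wordCount_first_derivative_sum (q : ℕ) (hq : 1 ≤ q) :
    HasSum (fun n : ℕ => (wordCount q n : ℝ) * ((n : ℝ) + q) / 2 ^ (n + q))
      (2 * (2 ^ q - 1)) := by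
  set A := ∑' n, bb q n with hA
  set B := ∑' n : ℕ, (n : ℝ) * bb q n with hB
  have hb : HasSum (bb q) A := (summable_bb hq).hasSum
  have hnb : HasSum (fun n : ℕ => (n : ℝ) * bb q n) B := (summable_nbb hq).hasSum
  have hxa := hxA hq
  have hxb := hxB hq
  rw [← hA] at hxa
  rw [← hA, ← hB] at hxb
  have hsum : HasSum (fun n : ℕ => (2⁻¹ : ℝ) ^ q * ((n : ℝ) * bb q n)
        + ((q : ℝ) * (2⁻¹ : ℝ) ^ q) * bb q n)
      ((2⁻¹ : ℝ) ^ q * B + ((q : ℝ) * (2⁻¹ : ℝ) ^ q) * A) :=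
    (hnb.mul_left _).add (hb.mul_left _)
  have hfun : (fun n : ℕ => (2⁻¹ : ℝ) ^ q * ((n : ℝ) * bb q n)
        + ((q : ℝ) * (2⁻¹ : ℝ) ^ q) * bb q n)
      = fun n : ℕ => (wordCount q n : ℝ) * ((n : ℝ) + q) / 2 ^ (n + q) := by
    funext n
    unfold bb
    rw [div_eq_mul_inv, ← inv_pow, pow_add]
    ring
  rw [hfun] at hsum
  have hx2 : ((2⁻¹ : ℝ) ^ q) * 2 ^ q = 1 := by rw [← mul_pow]; norm_num
  have hx0 : ((2⁻¹ : ℝ) ^ q) ≠ 0 := by positivity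
  have hAval : A = 2 ^ q := mul_left_cancel₀ hx0 (by rw [hxa, hx2])
  rw [hAval] at hxb
  convert hsum using 1
  rw [hAval]
  linear_combination -hxb + 2 * hx2
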